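/- Let a ∈ (0,1), let f_I ∈ C²([−1,1]), and let 0 < ā₀ < a/8. There exists a constant c(a) > 0, depending only on a, with the following property: if t̄ ≤ c(a), if |p_I − p_n(t)| < ā₀ and p_n(t) ± a ∈ [−1,1] for all t < t̄, and if |λ_n(t)| ≤ 2‖f_I‖_{L^∞(−1,1)}/√t for all t < t̄, then the Duhamel iterate f with data (p_n, λ_n) satisfies sup_{|x−p_I|<ā₀} |∂_x f(x,t)| ≤ 2‖f_I‖_{L^∞(−1,1)}/√t for all 0 < t < t̄. -/

import Mathlib

open MeasureTheory

/-- The 1D heat kernel `K(x,t) = (4πt)^{-1/2} exp(-x²/(4t))`. -/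
noncomputable def heatK (x t : ℝ) : ℝ :=
  (Real.sqrt (4 * Real.pi * t))⁻¹ * Real.exp (-(x ^ 2) / (4 * t))

/-- The Neumann heat kernel on `[-1,1]`:
`Γ(x,x';t) = Σ_{k∈ℤ} K(x − (2k + (−1)^{|k|} x'), t)`. -/
noncomputable def heatGamma (x x' t : ℝ) : ℝ :=
  ∑' k : ℤ, heatK (x - (2 * (k : ℝ) + (-1 : ℝ) ^ k.natAbs * x')) t

/-- The flux `λ(s) = −∂ₓ f(p(s), s)` at the free boundary. -/
noncomputable def flux (f : ℝ → ℝ → ℝ) (p : ℝ → ℝ) (s : ℝ) : ℝ :=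
  -deriv (fun x => f x s) (p s)

/-- `ā(s) = min {a, 1 − p(s), 1 + p(s)}`. -/
noncomputable def abar (a : ℝ) (p : ℝ → ℝ) (s : ℝ) : ℝ :=
  min a (min (1 - p s) (1 + p s))

/-- The sup norm `‖h‖_{L^∞(−1,1)}` (for continuous `h`). -/
noncomputable def supNorm (h : ℝ → ℝ) : ℝ := ⨆ x : Set.Icc (-1:ℝ) 1, |h x.1|

/-- Conditions (i)–(iii) on the initial datum `f_I ∈ C²([−1,1])`:
(i) unique zero `p_I ∈ (−1,1)`, positive to the left, negative to the right;
(ii) Neumann conditions `∂ₓf_I(±1) = 0`;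
(iii) `λ_I = −∂ₓ f_I(p_I) > 0` and `−∂ₓ f_I > λ_I/2` on `(p_I − a₀, p_I + a₀)`. -/
structure IsInitialDatum (fI : ℝ → ℝ) (pI a₀ lamI : ℝ) : Prop where
  smooth : ContDiffOn ℝ 2 fI (Set.Icc (-1) 1)
  pI_mem : pI ∈ Set.Ioo (-1 : ℝ) 1
  zero_at : fI pI = 0
  pos_left : ∀ x ∈ Set.Ico (-1 : ℝ) pI, 0 < fI x
  neg_right : ∀ x ∈ Set.Ioc pI 1, fI x < 0
  neumann_left : derivWithin fI (Set.Icc (-1) 1) (-1) = 0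
  neumann_right : derivWithin fI (Set.Icc (-1) 1) 1 = 0
  lamI_eq : lamI = -deriv fI pI
  lamI_pos : 0 < lamI
  slope : ∀ x ∈ Set.Ioo (pI - a₀) (pI + a₀), lamI / 2 < -deriv fI x

/-- A solution `(f, p)` of problem (P) on the time set `J` with parameter `a` and
initial datum `f_I`: `p` is a continuous curve in `(−1,1)`, `p(t)` is the unique zero
of `f(·,t)` (positive to the left, negative to the right), `f(·,t)` is differentiable
at `p(t)`, the flux is locally integrable on `J`, and the Duhamel identity holds. -/
structure IsSolutionP (a : ℝ) (fI : ℝ → ℝ) (J : Set ℝ) (f : ℝ → ℝ → ℝ) (p : ℝ → ℝ) : Prop where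
  p_cont : ContinuousOn p J
  p_mem : ∀ t ∈ J, p t ∈ Set.Ioo (-1 : ℝ) 1
  zero_at : ∀ t ∈ J, f (p t) t = 0
  pos_left : ∀ t ∈ J, ∀ x ∈ Set.Ico (-1 : ℝ) (p t), 0 < f x t
  neg_right : ∀ t ∈ J, ∀ x ∈ Set.Ioc (p t) 1, f x t < 0
  diff_at : ∀ t ∈ J, DifferentiableAt ℝ (fun x => f x t) (p t)
  flux_loc_int : LocallyIntegrableOn (flux f p) J
  duhamel : ∀ t ∈ J, ∀ x ∈ Set.Icc (-1 : ℝ) 1,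
      f x t = (∫ x' in (-1 : ℝ)..1, heatGamma x x' t * fI x')
        + ∫ s in (0 : ℝ)..t,
            (heatGamma x (p s - abar a p s) (t - s)
              - heatGamma x (p s + abar a p s) (t - s)) * flux f p s

/-- The Duhamel iterate with data `(p_n, λ_n)` and initial datum `f_I`. -/
noncomputable def duhamelIterate (a : ℝ) (fI pn lamn : ℝ → ℝ) (x t : ℝ) : ℝ :=
  (∫ x' in (-1 : ℝ)..1, heatGamma x x' t * fI x')
    + ∫ s in (0 : ℝ)..t,
        (heatGamma x (pn s - a) (t - s) - heatGamma x (pn s + a) (t - s)) * lamn s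

/-! ### Auxiliary material -/

open Real Filter Topology intervalIntegral

section Aux

/-- spatial derivative of the heat kernel -/
noncomputable def dK (x t : ℝ) : ℝ :=
  (Real.sqrt (4 * Real.pi * t))⁻¹ * (Real.exp (-(x ^ 2) / (4 * t)) * (-(2*x) / (4 * t)))

lemma hasDerivAt_heatK (t : ℝ) (x : ℝ) :
    HasDerivAt (fun y => heatK y t) (dK x t) x := by
  have h1 : HasDerivAt (fun y : ℝ => -(y ^ 2) / (4 * t)) (-(2*x)/(4*t)) x := by
    have := ((hasDerivAt_pow 2 x).neg).div_const (4*t)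
    simpa [pow_one] using this
  have h2 := (h1.exp).const_mul ((Real.sqrt (4 * Real.pi * t))⁻¹)
  simpa [heatK, dK, mul_comm, mul_assoc, mul_left_comm] using h2

lemma abs_dK_eq {t : ℝ} (ht : 0 < t) (y : ℝ) :
    |dK y t| = (Real.sqrt (4 * Real.pi * t))⁻¹ * (|y|/(2*t)) * Real.exp (-(y^2) / (4 * t)) := by
  have hs : (0:ℝ) ≤ (Real.sqrt (4 * Real.pi * t))⁻¹ := by positivity
  rw [dK, abs_mul, abs_mul, abs_of_nonneg hs, abs_of_pos (Real.exp_pos _)]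
  rw [abs_div, abs_neg, abs_mul]
  rw [abs_of_pos (by positivity : (0:ℝ) < 4*t), abs_two]
  ring_nf

lemma abs_dK_neg (t y : ℝ) : |dK (-y) t| = |dK y t| := by
  have : dK (-y) t = - dK y t := by rw [dK, dK]; ring_nf
  rw [this, abs_neg]

lemma abs_dK_le {t m P y : ℝ} (ht : 0 < t) (hm : 0 ≤ m) (h1 : m ≤ |y|) (h2 : |y| ≤ P) :
    |dK y t| ≤ (Real.sqrt (4 * Real.pi * t))⁻¹ * (P/(2*t)) * Real.exp (-(m^2) / (4 * t)) := by
  have hs : (0:ℝ) ≤ (Real.sqrt (4 * Real.pi * t))⁻¹ := by positivity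
  rw [abs_dK_eq ht]
  have he : Real.exp (-(y^2) / (4 * t)) ≤ Real.exp (-(m^2) / (4 * t)) := by
    apply Real.exp_le_exp.2
    apply div_le_div_of_nonneg_right (neg_le_neg ?_) (by positivity)
    calc m^2 ≤ |y|^2 := by nlinarith
    _ = y^2 := sq_abs y
  have hy : |y|/(2*t) ≤ P/(2*t) := by
    apply div_le_div_of_nonneg_right h2 (by positivity)
  calc (Real.sqrt (4 * Real.pi * t))⁻¹ * (|y|/(2*t)) * Real.exp (-(y^2) / (4 * t))
      ≤ (Real.sqrt (4 * Real.pi * t))⁻¹ * (P/(2*t)) * Real.exp (-(y^2) / (4 * t)) := by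
        apply mul_le_mul_of_nonneg_right (mul_le_mul_of_nonneg_left hy hs) (Real.exp_pos _).le
    _ ≤ _ := by
        have hP : (0:ℝ) ≤ P := le_trans (abs_nonneg y) h2
        apply mul_le_mul_of_nonneg_left he
          (mul_nonneg hs (div_nonneg hP (by positivity)))

lemma heatK_le {t m y : ℝ} (ht : 0 < t) (hm : 0 ≤ m) (h1 : m ≤ |y|) :
    heatK y t ≤ (Real.sqrt (4 * Real.pi * t))⁻¹ * Real.exp (-(m^2) / (4 * t)) := by
  apply mul_le_mul_of_nonneg_left ?_ (by positivity)
  apply Real.exp_le_exp.2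
  apply div_le_div_of_nonneg_right (neg_le_neg ?_) (by positivity)
  calc m^2 ≤ |y|^2 := by nlinarith
  _ = y^2 := sq_abs y

lemma heatK_nonneg (y t : ℝ) : 0 ≤ heatK y t := by
  unfold heatK; positivity

lemma heatK_zero (y : ℝ) : heatK y 0 = 0 := by simp [heatK]

lemma heatGamma_zero (x x' : ℝ) : heatGamma x x' 0 = 0 := by
  simp [heatGamma, heatK_zero]

lemma inv_sqrt_le {τ : ℝ} (hτ : 0 < τ) :
    (Real.sqrt (4*Real.pi*τ))⁻¹ ≤ (2*Real.sqrt τ)⁻¹ := by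
  apply inv_anti₀ (by positivity)
  rw [show (2:ℝ)*Real.sqrt τ = Real.sqrt (4*τ) by
    rw [show (4:ℝ)*τ = 2^2*τ by norm_num, Real.sqrt_mul (by positivity), Real.sqrt_sq]; norm_num]
  apply Real.sqrt_le_sqrt
  nlinarith [Real.pi_gt_three]

lemma supNorm_nonneg (h : ℝ → ℝ) : 0 ≤ supNorm h :=
  Real.iSup_nonneg (fun _ => abs_nonneg _)

lemma abs_le_supNorm {h : ℝ → ℝ} (hc : ContinuousOn h (Set.Icc (-1:ℝ) 1))
    {y : ℝ} (hy : y ∈ Set.Icc (-1:ℝ) 1) : |h y| ≤ supNorm h := by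
  have hb : BddAbove (Set.range (fun x : Set.Icc (-1:ℝ) 1 => |h x.1|)) := by
    have himg : BddAbove ((fun y => |h y|) '' Set.Icc (-1:ℝ) 1) :=
      (isCompact_Icc.image_of_continuousOn hc.abs).bddAbove
    have : Set.range (fun x : Set.Icc (-1:ℝ) 1 => |h x.1|) =
        (fun y => |h y|) '' Set.Icc (-1:ℝ) 1 := by
      ext v
      simp [Set.mem_image, Set.mem_range, Subtype.exists]
    rwa [this]
  exact le_ciSup hb ⟨y, hy⟩

/-! summability core -/

lemma core_nat (τ A B : ℝ) (hτ : 0 < τ) (hA : 0 ≤ A) :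
    Summable (fun n : ℕ => (2*(n:ℝ)+A) * Real.exp (-(max (2*(n:ℝ)-B) 0)^2/(4*τ))) := by
  set r : ℝ := Real.exp (-(1/(4*τ))) with hr
  have hr0 : 0 < r := Real.exp_pos _
  have hr1' : r < 1 := Real.exp_lt_one_iff.2 (by positivity |> neg_neg_iff_pos.2)
  have hr1 : ‖r‖ < 1 := by rwa [Real.norm_eq_abs, abs_of_pos hr0]
  have hb : Summable (fun n : ℕ => (2*(n:ℝ)+A) * r^n) := by
    have h1 : Summable (fun n : ℕ => (n:ℝ)*r^n) := by
      simpa using summable_pow_mul_geometric_of_norm_lt_one 1 hr1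
    have h2 : Summable (fun n : ℕ => r^n) := summable_geometric_of_lt_one hr0.le hr1'
    simpa [add_mul, mul_assoc] using (h1.mul_left 2).add (h2.mul_left A)
  set N : ℕ := max 1 ⌈B⌉₊ with hN
  rw [← summable_nat_add_iff N]
  refine Summable.of_nonneg_of_le (fun n => by positivity) (fun n => ?_)
    ((summable_nat_add_iff N).2 hb)
  apply mul_le_mul_of_nonneg_left ?_ (by positivity)
  have hBn : B ≤ ((n+N:ℕ):ℝ) := by
    have h1 : B ≤ (⌈B⌉₊:ℝ) := Nat.le_ceil B
    have h2 : (⌈B⌉₊:ℝ) ≤ ((n+N:ℕ):ℝ) := by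
      have : ⌈B⌉₊ ≤ n + N := le_trans (le_max_right 1 _) (Nat.le_add_left _ _)
      exact_mod_cast this
    linarith
  have h1n : (1:ℝ) ≤ ((n+N:ℕ):ℝ) := by
    have : 1 ≤ n + N := le_trans (le_max_left 1 _) (Nat.le_add_left _ _)
    exact_mod_cast this
  set M : ℝ := ((n+N:ℕ):ℝ)
  have hmax : max (2*M-B) 0 = 2*M - B := max_eq_left (by linarith)
  have hsq : M ≤ (max (2*M-B) 0)^2 := by rw [hmax]; nlinarith
  calc Real.exp (-(max (2*M-B) 0)^2/(4*τ)) ≤ Real.exp (-(M/(4*τ))) := by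
        apply Real.exp_le_exp.2
        rw [neg_div, neg_le_neg_iff]
        exact div_le_div_of_nonneg_right hsq (by positivity) |>.trans_eq rfl |>.trans_eq' rfl
    _ = r^(n+N:ℕ) := by
        rw [hr, ← Real.exp_nat_mul]
        congr 1
        push_cast [M]
        ring

lemma core_int (τ A B : ℝ) (hτ : 0 < τ) (hA : 0 ≤ A) :
    Summable (fun k : ℤ => (2*(|k|:ℝ)+A) * Real.exp (-(max (2*(|k|:ℝ)-B) 0)^2/(4*τ))) := by
  apply Summable.of_nat_of_neg
  · simpa using core_nat τ A B hτ hA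
  · simpa using core_nat τ A B hτ hA

/-! the majorant family `Wk` and its sum `Rbar` -/

noncomputable def Wk (a τ : ℝ) (k : ℤ) : ℝ :=
  (Real.sqrt (4*Real.pi*τ))⁻¹ * ((2*(|k|:ℝ)+3)/(2*τ)) *
    Real.exp (-(max (2*(|k|:ℝ)-2) 0 + 3*a/4)^2/(4*τ))

lemma Wk_nonneg (a τ : ℝ) (hτ : 0 < τ) (k : ℤ) : 0 ≤ Wk a τ k := by
  have : (0:ℝ) ≤ |(k:ℝ)| := abs_nonneg _
  unfold Wk; positivity

lemma Wk_le (a τ : ℝ) (hτ : 0 < τ) (ha : 0 ≤ a) (k : ℤ) :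
    Wk a τ k ≤ ((Real.sqrt (4*Real.pi*τ))⁻¹ * (2*τ)⁻¹ * Real.exp (-(3*a/4)^2/(4*τ))) *
      ((2*(|k|:ℝ)+3) * Real.exp (-(max (2*(|k|:ℝ)-2) 0)^2/(4*τ))) := by
  have hk : (0:ℝ) ≤ |(k:ℝ)| := abs_nonneg _
  have hu : (0:ℝ) ≤ max (2*(|k|:ℝ)-2) 0 := le_max_right _ _
  have hc : 0 ≤ 3*a/4 := by positivity
  have hexp : Real.exp (-(max (2*(|k|:ℝ)-2) 0 + 3*a/4)^2/(4*τ)) ≤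
      Real.exp (-(3*a/4)^2/(4*τ)) * Real.exp (-(max (2*(|k|:ℝ)-2) 0)^2/(4*τ)) := by
    rw [← Real.exp_add]
    apply Real.exp_le_exp.2
    rw [← add_div]
    apply div_le_div_of_nonneg_right ?_ (by positivity)
    nlinarith
  calc Wk a τ k ≤ (Real.sqrt (4*Real.pi*τ))⁻¹ * ((2*(|k|:ℝ)+3)/(2*τ)) *
      (Real.exp (-(3*a/4)^2/(4*τ)) * Real.exp (-(max (2*(|k|:ℝ)-2) 0)^2/(4*τ))) := by
        apply mul_le_mul_of_nonneg_left hexp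
        positivity
    _ = _ := by ring

lemma Wk_summable (a τ : ℝ) (hτ : 0 < τ) (ha : 0 ≤ a) : Summable (Wk a τ) := by
  apply Summable.of_nonneg_of_le (Wk_nonneg a τ hτ) (Wk_le a τ hτ ha)
  exact (core_int τ 3 2 hτ (by norm_num)).mul_left _

noncomputable def Ssum : ℝ :=
  ∑' k : ℤ, (2*(|k|:ℝ)+3) * Real.exp (-(max (2*(|k|:ℝ)-2) 0)^2/(4*1))

lemma Ssum_summable : Summable (fun k : ℤ =>
    (2*(|k|:ℝ)+3) * Real.exp (-(max (2*(|k|:ℝ)-2) 0)^2/(4*1))) :=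
  core_int 1 3 2 one_pos (by norm_num)

lemma Ssum_nonneg : 0 ≤ Ssum := tsum_nonneg (fun k => by
  have : (0:ℝ) ≤ |(k:ℝ)| := abs_nonneg _; positivity)

noncomputable def Rbar (a τ : ℝ) : ℝ := ∑' k, Wk a τ k

lemma Rbar_nonneg (a τ : ℝ) (hτ : 0 < τ) : 0 ≤ Rbar a τ :=
  tsum_nonneg (Wk_nonneg a τ hτ)

noncomputable def Ka (a : ℝ) : ℝ := Ssum * 4096/(81*a^4) + 1

lemma Ka_pos (a : ℝ) (ha : 0 < a) : 0 < Ka a := by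
  have := Ssum_nonneg; unfold Ka; positivity

lemma exp_neg_le_four_div_sq {u : ℝ} (hu : 0 < u) : Real.exp (-u) ≤ 4/u^2 := by
  have he : Real.exp (u/2) * Real.exp (u/2) = Real.exp u := by
    rw [← Real.exp_add]; ring_nf
  have h1 : u/2 + 1 ≤ Real.exp (u/2) := Real.add_one_le_exp _
  have h2 : u^2/4 ≤ Real.exp u := by nlinarith
  rw [Real.exp_neg]
  calc (Real.exp u)⁻¹ = 1/Real.exp u := (one_div _).symm
    _ ≤ 1/(u^2/4) := one_div_le_one_div_of_le (by positivity) h2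
    _ = 4/u^2 := by rw [one_div_div]

lemma Rbar_le (a τ : ℝ) (hτ : 0 < τ) (hτ1 : τ ≤ 1) (ha : 0 < a) :
    Rbar a τ ≤ Ka a * Real.sqrt τ := by
  have hst : 0 < Real.sqrt τ := Real.sqrt_pos.2 hτ
  have step1 : Rbar a τ ≤ ((Real.sqrt (4*Real.pi*τ))⁻¹ * (2*τ)⁻¹ *
      Real.exp (-(3*a/4)^2/(4*τ))) * Ssum := by
    have hterm : ∀ k : ℤ, Wk a τ k ≤ ((Real.sqrt (4*Real.pi*τ))⁻¹ * (2*τ)⁻¹ *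
        Real.exp (-(3*a/4)^2/(4*τ))) *
        ((2*(|k|:ℝ)+3) * Real.exp (-(max (2*(|k|:ℝ)-2) 0)^2/(4*1))) := by
      intro k
      have hk : (0:ℝ) ≤ |(k:ℝ)| := abs_nonneg _
      refine (Wk_le a τ hτ ha.le k).trans ?_
      apply mul_le_mul_of_nonneg_left ?_ (by positivity)
      apply mul_le_mul_of_nonneg_left ?_ (by positivity)
      apply Real.exp_le_exp.2
      rw [neg_div, neg_div, neg_le_neg_iff]
      apply div_le_div_of_nonneg_left (by positivity) (by positivity) (by linarith)
    have hsum2 : Summable (fun k : ℤ => ((Real.sqrt (4*Real.pi*τ))⁻¹ * (2*τ)⁻¹ *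
        Real.exp (-(3*a/4)^2/(4*τ))) *
        ((2*(|k|:ℝ)+3) * Real.exp (-(max (2*(|k|:ℝ)-2) 0)^2/(4*1)))) :=
      Ssum_summable.mul_left _
    calc Rbar a τ ≤ ∑' k : ℤ, ((Real.sqrt (4*Real.pi*τ))⁻¹ * (2*τ)⁻¹ *
        Real.exp (-(3*a/4)^2/(4*τ))) *
        ((2*(|k|:ℝ)+3) * Real.exp (-(max (2*(|k|:ℝ)-2) 0)^2/(4*1))) :=
          Summable.tsum_le_tsum hterm (Wk_summable a τ hτ ha.le) hsum2
      _ = _ := by rw [tsum_mul_left]; rfl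
  have hexp4 : Real.exp (-(3*a/4)^2/(4*τ)) ≤ 16384*τ^2/(81*a^4) := by
    have hu : (0:ℝ) < (3*a/4)^2/(4*τ) := by positivity
    calc Real.exp (-(3*a/4)^2/(4*τ)) = Real.exp (-((3*a/4)^2/(4*τ))) := by rw [neg_div]
      _ ≤ 4/((3*a/4)^2/(4*τ))^2 := exp_neg_le_four_div_sq hu
      _ = 16384*τ^2/(81*a^4) := by
          field_simp
          ring
  have hA : (Real.sqrt (4*Real.pi*τ))⁻¹ ≤ (2*Real.sqrt τ)⁻¹ := inv_sqrt_le hτ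
  have hs2 : Real.sqrt τ ^ 2 = τ := Real.sq_sqrt hτ.le
  calc Rbar a τ ≤ ((Real.sqrt (4*Real.pi*τ))⁻¹ * (2*τ)⁻¹ *
      Real.exp (-(3*a/4)^2/(4*τ))) * Ssum := step1
    _ ≤ ((2*Real.sqrt τ)⁻¹ * (2*τ)⁻¹ * (16384*τ^2/(81*a^4))) * Ssum := by
        apply mul_le_mul_of_nonneg_right ?_ Ssum_nonneg
        apply mul_le_mul ?_ hexp4 (Real.exp_pos _).le (by positivity)
        apply mul_le_mul_of_nonneg_right hA (by positivity)
    _ = (Ssum * 4096/(81*a^4)) * Real.sqrt τ := by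
        field_simp
        linear_combination (-16384*Ssum) * hs2
    _ ≤ Ka a * Real.sqrt τ := by
        unfold Ka
        nlinarith [hst]

/-! reflected points -/

noncomputable def bpt (x' : ℝ) (k : ℤ) : ℝ := 2 * (k:ℝ) + (-1 : ℝ) ^ k.natAbs * x'

lemma heatGamma_eq (z x' τ : ℝ) : heatGamma z x' τ = ∑' k : ℤ, heatK (z - bpt x' k) τ := rfl

lemma bpt_upper {x' : ℝ} (hx' : |x'| ≤ 1) (k : ℤ) : |bpt x' k| ≤ 2*(|k|:ℝ) + 1 := by
  have h1 : |(-1:ℝ)^k.natAbs * x'| = |x'| := by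
    rw [abs_mul, abs_pow, abs_neg, abs_one, one_pow, one_mul]
  have h2 : |2*(k:ℝ)| = 2*(|k|:ℝ) := by rw [abs_mul, abs_two]
  calc |bpt x' k| ≤ |2*(k:ℝ)| + |(-1:ℝ)^k.natAbs * x'| := abs_add_le _ _
    _ ≤ 2*(|k|:ℝ) + 1 := by rw [h1, h2]; linarith

lemma bpt_lower {x' : ℝ} (hx' : |x'| ≤ 1) (k : ℤ) : 2*(|k|:ℝ) - 1 ≤ |bpt x' k| := by
  have h1 : |(-1:ℝ)^k.natAbs * x'| = |x'| := by
    rw [abs_mul, abs_pow, abs_neg, abs_one, one_pow, one_mul]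
  have h2 : |2*(k:ℝ)| = 2*(|k|:ℝ) := by rw [abs_mul, abs_two]
  have h3 : |2*(k:ℝ)| - |(-1:ℝ)^k.natAbs * x'| ≤ |bpt x' k| := by
    have := abs_sub_abs_le_abs_sub (2*(k:ℝ)) (-((-1:ℝ)^k.natAbs * x'))
    simpa [bpt, sub_neg_eq_add] using this
  rw [h1, h2] at h3
  linarith

lemma bpt_zero (x' : ℝ) : bpt x' 0 = x' := by simp [bpt]

lemma dist_lower' {z x' : ℝ} (hz : |z| ≤ 3) (hx' : |x'| ≤ 1) (k : ℤ) :
    max (2*(|k|:ℝ)-4) 0 ≤ |z - bpt x' k| := by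
  have h1 := bpt_lower hx' k
  have h2 : |bpt x' k| - |z| ≤ |z - bpt x' k| := by
    have := abs_sub_abs_le_abs_sub (bpt x' k) z
    rw [abs_sub_comm] at this
    linarith
  exact max_le (by linarith) (abs_nonneg _)

lemma dist_upper' {z x' : ℝ} (hz : |z| ≤ 3) (hx' : |x'| ≤ 1) (k : ℤ) :
    |z - bpt x' k| ≤ 2*(|k|:ℝ) + 4 := by
  have h1 := bpt_upper hx' k
  calc |z - bpt x' k| ≤ |z| + |bpt x' k| := abs_sub _ _
    _ ≤ 2*(|k|:ℝ) + 4 := by linarith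

/-! summability along reflected points -/

lemma summable_heatK_bpt {τ z x' : ℝ} (hτ : 0 < τ) (hx' : |x'| ≤ 1) (hz : |z| ≤ 3) :
    Summable (fun k : ℤ => heatK (z - bpt x' k) τ) := by
  have hmaj : Summable (fun k : ℤ => ((Real.sqrt (4*Real.pi*τ))⁻¹) *
      ((2*(|k|:ℝ)+1) * Real.exp (-(max (2*(|k|:ℝ)-4) 0)^2/(4*τ)))) :=
    (core_int τ 1 4 hτ (by norm_num)).mul_left _
  refine Summable.of_nonneg_of_le (fun k => heatK_nonneg _ _) (fun k => ?_) hmaj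
  have hk : (0:ℝ) ≤ |(k:ℝ)| := abs_nonneg _
  calc heatK (z - bpt x' k) τ
      ≤ (Real.sqrt (4*Real.pi*τ))⁻¹ * Real.exp (-(max (2*(|k|:ℝ)-4) 0)^2/(4*τ)) :=
        heatK_le hτ (le_max_right _ _) (dist_lower' hz hx' k)
    _ ≤ (Real.sqrt (4*Real.pi*τ))⁻¹ * ((2*(|k|:ℝ)+1) * Real.exp (-(max (2*(|k|:ℝ)-4) 0)^2/(4*τ))) := by
        apply mul_le_mul_of_nonneg_left ?_ (by positivity)
        nlinarith [Real.exp_pos (-(max (2*(|k|:ℝ)-4) 0)^2/(4*τ))]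

lemma summable_dK_bpt {τ z x' : ℝ} (hτ : 0 < τ) (hx' : |x'| ≤ 1) (hz : |z| ≤ 3) :
    Summable (fun k : ℤ => dK (z - bpt x' k) τ) := by
  apply Summable.of_norm_bounded (g := fun k : ℤ => ((Real.sqrt (4*Real.pi*τ))⁻¹ * (2*τ)⁻¹) *
      ((2*(|k|:ℝ)+4) * Real.exp (-(max (2*(|k|:ℝ)-4) 0)^2/(4*τ))))
    ((core_int τ 4 4 hτ (by norm_num)).mul_left _)
  intro k
  rw [Real.norm_eq_abs]
  refine (abs_dK_le hτ (le_max_right _ _) (dist_lower' hz hx' k) (dist_upper' hz hx' k)).trans ?_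
  apply le_of_eq
  ring

/-- crude uniform bound for the derivative sums -/
noncomputable def CB (τ : ℝ) : ℝ := ∑' k : ℤ, ((Real.sqrt (4*Real.pi*τ))⁻¹ * (2*τ)⁻¹) *
      ((2*(|k|:ℝ)+4) * Real.exp (-(max (2*(|k|:ℝ)-4) 0)^2/(4*τ)))

lemma CB_nonneg (τ : ℝ) (hτ : 0 < τ) : 0 ≤ CB τ :=
  tsum_nonneg (fun k => by
    have : (0:ℝ) ≤ |(k:ℝ)| := abs_nonneg _
    positivity)

lemma abs_tsum_dK_le_CB {τ z x' : ℝ} (hτ : 0 < τ) (hx' : |x'| ≤ 1) (hz : |z| ≤ 3) :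
    |∑' k : ℤ, dK (z - bpt x' k) τ| ≤ CB τ := by
  have hbd : ∀ k : ℤ, |dK (z - bpt x' k) τ| ≤ ((Real.sqrt (4*Real.pi*τ))⁻¹ * (2*τ)⁻¹) *
      ((2*(|k|:ℝ)+4) * Real.exp (-(max (2*(|k|:ℝ)-4) 0)^2/(4*τ))) := by
    intro k
    refine (abs_dK_le hτ (le_max_right _ _) (dist_lower' hz hx' k) (dist_upper' hz hx' k)).trans ?_
    apply le_of_eq; ring
  have habs : Summable (fun k : ℤ => |dK (z - bpt x' k) τ|) :=
    Summable.of_nonneg_of_le (fun k => abs_nonneg _) hbd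
      ((core_int τ 4 4 hτ (by norm_num)).mul_left _)
  have hnorm : Summable (fun k : ℤ => ‖dK (z - bpt x' k) τ‖) := by
    simp only [Real.norm_eq_abs]; exact habs
  have h1 := norm_tsum_le_tsum_norm hnorm
  simp only [Real.norm_eq_abs] at h1
  exact h1.trans (Summable.tsum_le_tsum hbd habs ((core_int τ 4 4 hτ (by norm_num)).mul_left _))

/-! derivative of the lattice sum -/

lemma hasDerivAt_tsum_heatK {τ : ℝ} {b : ℤ → ℝ} (hτ : 0 < τ)
    (hb : ∀ k : ℤ, |b k| ≤ 2*(|k|:ℝ) + 1)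
    (hb2 : ∀ k : ℤ, 2*(|k|:ℝ) - 1 ≤ |b k|) {x₀ : ℝ} (hx₀ : |x₀| ≤ 2) :
    HasDerivAt (fun z => ∑' k : ℤ, heatK (z - b k) τ) (∑' k : ℤ, dK (x₀ - b k) τ) x₀ := by
  have dist_lower : ∀ {z : ℝ}, |z| ≤ 3 → ∀ k : ℤ, max (2*(|k|:ℝ)-4) 0 ≤ |z - b k| := by
    intro z hz k
    have h1 := hb2 k
    have h2 : |b k| - |z| ≤ |z - b k| := by
      have := abs_sub_abs_le_abs_sub (b k) z
      rw [abs_sub_comm] at this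
      linarith
    exact max_le (by linarith) (abs_nonneg _)
  have dist_upper : ∀ {z : ℝ}, |z| ≤ 3 → ∀ k : ℤ, |z - b k| ≤ 2*(|k|:ℝ) + 4 := by
    intro z hz k
    have h1 := hb k
    calc |z - b k| ≤ |z| + |b k| := abs_sub _ _
      _ ≤ 2*(|k|:ℝ) + 4 := by linarith
  have hmem : x₀ ∈ Set.Ioo (-3:ℝ) 3 := by
    constructor <;> [linarith [neg_abs_le x₀]; linarith [le_abs_self x₀]]
  refine hasDerivAt_of_tendstoUniformlyOn (l := (atTop : Filter (Finset ℤ)))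
    (isOpen_Ioo (a := (-3:ℝ)) (b := 3))
    (f := fun (s : Finset ℤ) z => ∑ k ∈ s, heatK (z - b k) τ)
    (f' := fun (s : Finset ℤ) z => ∑ k ∈ s, dK (z - b k) τ)
    (g' := fun z => ∑' k : ℤ, dK (z - b k) τ) ?_ ?_ ?_ hmem
  · apply tendstoUniformlyOn_tsum (u := fun k : ℤ => ((Real.sqrt (4*Real.pi*τ))⁻¹ * (2*τ)⁻¹) *
      ((2*(|k|:ℝ)+4) * Real.exp (-(max (2*(|k|:ℝ)-4) 0)^2/(4*τ))))
      ((core_int τ 4 4 hτ (by norm_num)).mul_left _)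
    intro k z hz
    have hz3 : |z| ≤ 3 := by
      rw [abs_le]; exact ⟨hz.1.le, hz.2.le⟩
    rw [Real.norm_eq_abs]
    refine (abs_dK_le hτ (le_max_right _ _) (dist_lower hz3 k) (dist_upper hz3 k)).trans ?_
    apply le_of_eq; ring
  · filter_upwards with s z hz
    apply HasDerivAt.fun_sum
    intro k _
    have h := (hasDerivAt_heatK τ (z - b k)).comp z ((hasDerivAt_id z).sub_const (b k))
    exact h.congr_deriv (by ring)
  · intro z hz
    have hz3 : |z| ≤ 3 := by rw [abs_le]; exact ⟨hz.1.le, hz.2.le⟩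
    have hsum : Summable (fun k : ℤ => heatK (z - b k) τ) := by
      have hmaj : Summable (fun k : ℤ => ((Real.sqrt (4*Real.pi*τ))⁻¹) *
          ((2*(|k|:ℝ)+1) * Real.exp (-(max (2*(|k|:ℝ)-4) 0)^2/(4*τ)))) :=
        (core_int τ 1 4 hτ (by norm_num)).mul_left _
      refine Summable.of_nonneg_of_le (fun k => heatK_nonneg _ _) (fun k => ?_) hmaj
      have hk : (0:ℝ) ≤ |(k:ℝ)| := abs_nonneg _
      calc heatK (z - b k) τ
          ≤ (Real.sqrt (4*Real.pi*τ))⁻¹ * Real.exp (-(max (2*(|k|:ℝ)-4) 0)^2/(4*τ)) :=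
            heatK_le hτ (le_max_right _ _) (dist_lower hz3 k)
        _ ≤ (Real.sqrt (4*Real.pi*τ))⁻¹ *
            ((2*(|k|:ℝ)+1) * Real.exp (-(max (2*(|k|:ℝ)-4) 0)^2/(4*τ))) := by
            apply mul_le_mul_of_nonneg_left ?_ (by positivity)
            nlinarith [Real.exp_pos (-(max (2*(|k|:ℝ)-4) 0)^2/(4*τ))]
    exact hsum.hasSum

/-! continuity in the second variable (for measurability) -/

lemma continuousOn_tsum_heatK {τ z : ℝ} (hτ : 0 < τ) (hz : |z| ≤ 3) :
    ContinuousOn (fun x' : ℝ => ∑' k : ℤ, heatK (z - bpt x' k) τ) (Set.Icc (-1:ℝ) 1) := by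
  refine TendstoUniformlyOn.continuousOn
    (tendstoUniformlyOn_tsum (u := fun k : ℤ => ((Real.sqrt (4*Real.pi*τ))⁻¹) *
      ((2*(|k|:ℝ)+1) * Real.exp (-(max (2*(|k|:ℝ)-4) 0)^2/(4*τ))))
      ((core_int τ 1 4 hτ (by norm_num)).mul_left _) ?_) ?_
  · intro k x' hx'
    have hx'1 : |x'| ≤ 1 := by rw [abs_le]; exact ⟨hx'.1, hx'.2⟩
    have hk : (0:ℝ) ≤ |(k:ℝ)| := abs_nonneg _
    rw [Real.norm_eq_abs, abs_of_nonneg (heatK_nonneg _ _)]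
    calc heatK (z - bpt x' k) τ
        ≤ (Real.sqrt (4*Real.pi*τ))⁻¹ * Real.exp (-(max (2*(|k|:ℝ)-4) 0)^2/(4*τ)) :=
          heatK_le hτ (le_max_right _ _) (dist_lower' hz hx'1 k)
      _ ≤ _ := by
          apply mul_le_mul_of_nonneg_left ?_ (by positivity)
          nlinarith [Real.exp_pos (-(max (2*(|k|:ℝ)-4) 0)^2/(4*τ))]
  · apply Filter.Eventually.frequently
    filter_upwards with s
    apply continuousOn_finset_sum
    intro k _
    apply Continuous.continuousOn
    unfold heatK bpt
    fun_prop

lemma continuousOn_tsum_dK {τ z : ℝ} (hτ : 0 < τ) (hz : |z| ≤ 3) :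
    ContinuousOn (fun x' : ℝ => ∑' k : ℤ, dK (z - bpt x' k) τ) (Set.Icc (-1:ℝ) 1) := by
  refine TendstoUniformlyOn.continuousOn
    (tendstoUniformlyOn_tsum (u := fun k : ℤ => ((Real.sqrt (4*Real.pi*τ))⁻¹ * (2*τ)⁻¹) *
      ((2*(|k|:ℝ)+4) * Real.exp (-(max (2*(|k|:ℝ)-4) 0)^2/(4*τ))))
      ((core_int τ 4 4 hτ (by norm_num)).mul_left _) ?_) ?_
  · intro k x' hx'
    have hx'1 : |x'| ≤ 1 := by rw [abs_le]; exact ⟨hx'.1, hx'.2⟩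
    rw [Real.norm_eq_abs]
    refine (abs_dK_le hτ (le_max_right _ _) (dist_lower' hz hx'1 k)
      (dist_upper' hz hx'1 k)).trans ?_
    apply le_of_eq; ring
  · apply Filter.Eventually.frequently
    filter_upwards with s
    apply continuousOn_finset_sum
    intro k _
    apply Continuous.continuousOn
    unfold dK bpt
    fun_prop

/-! tsum bounds via `Wk` -/

lemma abs_dK_le_Wk {a τ : ℝ} (hτ : 0 < τ) (ha : 0 < a) {k : ℤ} {y : ℝ}
    (hm : max (2*(|k|:ℝ)-2) 0 + 3*a/4 ≤ |y|) (hP : |y| ≤ 2*(|k|:ℝ)+3) :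
    |dK y τ| ≤ Wk a τ k :=
  abs_dK_le hτ (by positivity) hm hP

lemma abs_tsum_dK_le_Rbar {a τ : ℝ} (hτ : 0 < τ) (ha : 0 < a) {b : ℤ → ℝ} {z : ℝ}
    (h : ∀ k : ℤ, max (2*(|k|:ℝ)-2) 0 + 3*a/4 ≤ |z - b k| ∧ |z - b k| ≤ 2*(|k|:ℝ)+3) :
    |∑' k : ℤ, dK (z - b k) τ| ≤ Rbar a τ := by
  have hbd : ∀ k : ℤ, |dK (z - b k) τ| ≤ Wk a τ k :=
    fun k => abs_dK_le_Wk hτ ha (h k).1 (h k).2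
  have habs : Summable (fun k : ℤ => |dK (z - b k) τ|) :=
    Summable.of_nonneg_of_le (fun k => abs_nonneg _) hbd (Wk_summable a τ hτ ha.le)
  have hnorm : Summable (fun k : ℤ => ‖dK (z - b k) τ‖) := by
    simp only [Real.norm_eq_abs]; exact habs
  have h1 := norm_tsum_le_tsum_norm hnorm
  simp only [Real.norm_eq_abs] at h1
  calc |∑' k : ℤ, dK (z - b k) τ| ≤ ∑' k : ℤ, |dK (z - b k) τ| := h1
    _ ≤ Rbar a τ := Summable.tsum_le_tsum hbd habs (Wk_summable a τ hτ ha.le)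

lemma abs_tsum_dK_split {a τ : ℝ} (hτ : 0 < τ) (ha : 0 < a) {b : ℤ → ℝ} {z : ℝ}
    (h : ∀ k : ℤ, k ≠ 0 → max (2*(|k|:ℝ)-2) 0 + 3*a/4 ≤ |z - b k| ∧ |z - b k| ≤ 2*(|k|:ℝ)+3)
    (hsum : Summable (fun k : ℤ => dK (z - b k) τ)) :
    |∑' k : ℤ, dK (z - b k) τ| ≤ |dK (z - b 0) τ| + Rbar a τ := by
  rw [hsum.tsum_eq_add_tsum_ite 0]
  refine (abs_add_le _ _).trans ?_
  apply add_le_add le_rfl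
  have hbd : ∀ k : ℤ, |(if k = 0 then 0 else dK (z - b k) τ)| ≤ Wk a τ k := by
    intro k
    by_cases hk : k = 0
    · simp [hk, Wk_nonneg a τ hτ 0]
    · simp only [hk, if_false]
      exact abs_dK_le_Wk hτ ha (h k hk).1 (h k hk).2
  have habs : Summable (fun k : ℤ => |(if k = 0 then 0 else dK (z - b k) τ)|) :=
    Summable.of_nonneg_of_le (fun k => abs_nonneg _) hbd (Wk_summable a τ hτ ha.le)
  have hnorm : Summable (fun k : ℤ => ‖(if k = 0 then 0 else dK (z - b k) τ)‖) := by
    simp only [Real.norm_eq_abs]; exact habs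
  have h1 := norm_tsum_le_tsum_norm hnorm
  simp only [Real.norm_eq_abs] at h1
  calc |∑' k : ℤ, (if k = 0 then 0 else dK (z - b k) τ)|
      ≤ ∑' k : ℤ, |(if k = 0 then 0 else dK (z - b k) τ)| := h1
    _ ≤ Rbar a τ := Summable.tsum_le_tsum hbd habs (Wk_summable a τ hτ ha.le)

/-- distance bounds for points near the interface -/
lemma dist_bpt_bounds_ne {a ζ p : ℝ} (ha : 0 < a) (hζ : |ζ| ≤ 1 - 3*a/4)
    (hp : |p| ≤ 1) {k : ℤ} (hk : k ≠ 0) :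
    max (2*(|k|:ℝ)-2) 0 + 3*a/4 ≤ |ζ - bpt p k| ∧ |ζ - bpt p k| ≤ 2*(|k|:ℝ)+3 := by
  have hk1 : (1:ℝ) ≤ |(k:ℝ)| := by
    have : (1:ℤ) ≤ |k| := Int.one_le_abs hk
    calc (1:ℝ) = ((1:ℤ):ℝ) := by norm_num
      _ ≤ ((|k|:ℤ):ℝ) := by exact_mod_cast this
      _ = |(k:ℝ)| := by rw [Int.cast_abs]
  have hmax : max (2*(|k|:ℝ)-2) 0 = 2*(|k|:ℝ)-2 := max_eq_left (by linarith)
  have hlow := bpt_lower hp k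
  have hup := bpt_upper hp k
  constructor
  · rw [hmax]
    have h2 : |bpt p k| - |ζ| ≤ |ζ - bpt p k| := by
      have := abs_sub_abs_le_abs_sub (bpt p k) ζ
      rw [abs_sub_comm] at this
      linarith
    linarith
  · calc |ζ - bpt p k| ≤ |ζ| + |bpt p k| := abs_sub _ _
      _ ≤ 2*(|k|:ℝ)+3 := by linarith

lemma dist_bpt_bounds {a ζ p : ℝ} (ha : 0 < a) (hζ : |ζ| ≤ 1 - 3*a/4)
    (hp : |p| ≤ 1) (hζp : 3*a/4 ≤ |ζ - p|) (k : ℤ) :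
    max (2*(|k|:ℝ)-2) 0 + 3*a/4 ≤ |ζ - bpt p k| ∧ |ζ - bpt p k| ≤ 2*(|k|:ℝ)+3 := by
  by_cases hk : k = 0
  · subst hk
    rw [bpt_zero]
    have h0 : |((0:ℤ):ℝ)| = 0 := by norm_num
    constructor
    · rw [h0]
      have : max (2*(0:ℝ)-2) 0 = 0 := by norm_num
      rw [this]
      linarith
    · rw [h0]
      calc |ζ - p| ≤ |ζ| + |p| := abs_sub _ _
        _ ≤ 2*(0:ℝ)+3 := by linarith
  · exact dist_bpt_bounds_ne ha hζ hp hk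

/-! integral of |dK| -/

lemma continuous_abs_dK (t : ℝ) : Continuous (fun y => |dK y t|) := by
  apply Continuous.abs
  unfold dK
  fun_prop

lemma integral_abs_dK_half {t : ℝ} (ht : 0 < t) :
    (∫ y in (0:ℝ)..2, |dK y t|) ≤ (Real.sqrt (4*Real.pi*t))⁻¹ := by
  set c := (Real.sqrt (4*Real.pi*t))⁻¹ with hc
  have hc0 : 0 ≤ c := by positivity
  have heq : ∀ y ∈ Set.uIcc (0:ℝ) 2, |dK y t| = c * (Real.exp (-(y^2) / (4*t)) * ((2*y)/(4*t))) := by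
    intro y hy
    rw [Set.uIcc_of_le (by norm_num : (0:ℝ) ≤ 2)] at hy
    rw [abs_dK_eq ht, abs_of_nonneg hy.1]
    ring
  rw [integral_congr heq]
  have hderiv : ∀ y ∈ Set.uIcc (0:ℝ) 2,
      HasDerivAt (fun y => -c * Real.exp (-(y^2)/(4*t)))
        (c * (Real.exp (-(y^2) / (4*t)) * ((2*y)/(4*t)))) y := by
    intro y _
    have h1 : HasDerivAt (fun y : ℝ => -(y ^ 2) / (4 * t)) (-(2*y)/(4*t)) y := by
      have := ((hasDerivAt_pow 2 y).neg).div_const (4*t)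
      simpa [pow_one] using this
    have h2 := (h1.exp).const_mul (-c)
    exact h2.congr_deriv (by ring)
  have hint : IntervalIntegrable (fun y => c * (Real.exp (-(y^2) / (4*t)) * ((2*y)/(4*t))))
      volume 0 2 := by
    apply Continuous.intervalIntegrable
    fun_prop
  rw [integral_eq_sub_of_hasDerivAt hderiv hint]
  have h3 : Real.exp (-(2^2:ℝ)/(4*t)) ≤ 1 := by
    apply Real.exp_le_one_iff.2
    rw [neg_div]
    exact neg_nonpos_of_nonneg (by positivity)
  have h5 : Real.exp (-(0^2:ℝ)/(4*t)) = 1 := by norm_num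
  nlinarith [Real.exp_pos (-(2^2:ℝ)/(4*t))]

lemma integral_abs_dK_le {t : ℝ} (ht : 0 < t) {x : ℝ} (hx : |x| ≤ 1) :
    (∫ x' in (-1:ℝ)..1, |dK (x - x') t|) ≤ 1/Real.sqrt t := by
  have hcont := continuous_abs_dK t
  have h1 : (∫ x' in (-1:ℝ)..1, |dK (x - x') t|) = ∫ y in (x-1)..(x+1), |dK y t| := by
    have := integral_comp_sub_left (a := (-1:ℝ)) (b := 1) (fun y => |dK y t|) x
    simpa [sub_neg_eq_add] using this
  rw [h1]
  have habs := abs_le.1 hx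
  have h2 : (∫ y in (x-1)..(x+1), |dK y t|) ≤ ∫ y in (-2:ℝ)..2, |dK y t| := by
    apply integral_mono_interval (by linarith) (by linarith) (by linarith)
    · filter_upwards with y using abs_nonneg _
    · exact hcont.intervalIntegrable _ _
  have h3 : (∫ y in (-2:ℝ)..2, |dK y t|)
      = (∫ y in (-2:ℝ)..0, |dK y t|) + ∫ y in (0:ℝ)..2, |dK y t| := by
    rw [integral_add_adjacent_intervals (hcont.intervalIntegrable _ _)
      (hcont.intervalIntegrable _ _)]
  have h4 : (∫ y in (-2:ℝ)..0, |dK y t|) = ∫ y in (0:ℝ)..2, |dK y t| := by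
    have h5 : (∫ y in (0:ℝ)..2, |dK (-y) t|) = ∫ y in (-2:ℝ)..0, |dK y t| := by
      have := integral_comp_neg (a := (0:ℝ)) (b := 2) (fun y => |dK y t|)
      simpa using this
    rw [← h5]
    congr 1
    funext y
    rw [abs_dK_neg]
  have h6 := integral_abs_dK_half ht
  have h7 := inv_sqrt_le ht
  have h9 : (1:ℝ)/Real.sqrt t = (Real.sqrt t)⁻¹ := one_div _
  have hst : 0 < Real.sqrt t := Real.sqrt_pos.2 ht
  calc (∫ y in (x-1)..(x+1), |dK y t|) ≤ ∫ y in (-2:ℝ)..2, |dK y t| := h2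
    _ = (∫ y in (-2:ℝ)..0, |dK y t|) + ∫ y in (0:ℝ)..2, |dK y t| := h3
    _ = 2 * ∫ y in (0:ℝ)..2, |dK y t| := by rw [h4]; ring
    _ ≤ 2 * (Real.sqrt (4*Real.pi*t))⁻¹ := by linarith
    _ ≤ 1/Real.sqrt t := by
        rw [h9]
        have h8 : (2*Real.sqrt t)⁻¹ = (Real.sqrt t)⁻¹/2 := by rw [mul_inv]; ring
        rw [h8] at h7
        linarith

/-! the key non-measurable-safe derivative bound -/

lemma keyB (A B : ℝ → ℝ) (x dA ε₀ r : ℝ) (hε : 0 ≤ ε₀) (hr : 0 < r) (S : Set ℝ)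
    (hLip : ∀ z₁ ∈ S ∩ Metric.ball x r, ∀ z₂ ∈ S ∩ Metric.ball x r,
      |B z₁ - B z₂| ≤ ε₀ * |z₁ - z₂|)
    (hS0 : ∀ z ∈ Metric.ball x r, z ∉ S → B z = 0)
    (hA : HasDerivAt A dA x) :
    |deriv (fun z => A z + B z) x| ≤ |dA| + ε₀ := by
  by_cases hd : DifferentiableAt ℝ (fun z => A z + B z) x
  swap
  · rw [deriv_zero_of_not_differentiableAt hd]
    simp only [abs_zero]
    positivity
  · set d := deriv (fun z => A z + B z) x with hdef
    have hF : HasDerivAt (fun z => A z + B z) d x := hd.hasDerivAt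
    have hB : HasDerivAt B (d - dA) x := by
      have h2 : B = fun z => (A z + B z) - A z := by funext z; ring
      rw [h2]
      exact hF.sub hA
    set dB := d - dA with hdBdef
    suffices hdB : |dB| ≤ ε₀ by
      have : d = dA + dB := by rw [hdBdef]; ring
      rw [this]
      exact (abs_add_le _ _).trans (by linarith)
    have hslope : Tendsto (slope B x) (𝓝[≠] x) (𝓝 dB) :=
      hasDerivAt_iff_tendsto_slope.1 hB
    have hball : ∀ᶠ z in 𝓝[≠] x, z ∈ Metric.ball x r :=
      eventually_nhdsWithin_of_eventually_nhds (Metric.ball_mem_nhds x hr)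
    have hBcont : Tendsto B (𝓝[≠] x) (𝓝 (B x)) :=
      hB.continuousAt.tendsto.mono_left nhdsWithin_le_nhds
    by_cases hfreq : ∃ᶠ z in 𝓝[≠] x, z ∉ S
    · have hfreq' : ∃ᶠ z in 𝓝[≠] x, B z = 0 :=
        (hfreq.and_eventually hball).mono (fun z hz => hS0 z hz.2 hz.1)
      have hBx : B x = 0 := by
        have hf0 : ∃ᶠ z in 𝓝[≠] x, B z ∈ ({0} : Set ℝ) :=
          hfreq'.mono (fun z hz => by simp [hz])
        have h := mem_closure_of_frequently_of_tendsto hf0 hBcont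
        simpa using h
      have hfreq'' : ∃ᶠ z in 𝓝[≠] x, slope B x z ∈ ({0} : Set ℝ) := by
        refine hfreq'.mono (fun z hz => ?_)
        simp [slope_def_field, hz, hBx]
      have hdB0 : dB ∈ closure ({0} : Set ℝ) :=
        mem_closure_of_frequently_of_tendsto hfreq'' hslope
      rw [closure_singleton] at hdB0
      simp only [Set.mem_singleton_iff] at hdB0
      rw [hdB0]
      simpa using hε
    · have hev : ∀ᶠ z in 𝓝[≠] x, z ∈ S := by
        rw [Filter.not_frequently] at hfreq
        simpa using hfreq
      have hev2 : ∀ᶠ z in 𝓝[≠] x, |slope B x z| ≤ ε₀ := by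
        by_cases hxS : x ∈ S
        · filter_upwards [hev, hball, self_mem_nhdsWithin] with z hz hzb hzx
          have hlip := hLip z ⟨hz, hzb⟩ x ⟨hxS, Metric.mem_ball_self hr⟩
          have hzx' : z - x ≠ 0 := sub_ne_zero.2 hzx
          rw [slope_def_field, abs_div]
          rw [div_le_iff₀ (abs_pos.2 hzx')]
          exact hlip
        · have hBx : B x = 0 := hS0 x (Metric.mem_ball_self hr) hxS
          filter_upwards [hev, hball, self_mem_nhdsWithin] with z hz hzb hzx
          have hzx' : z - x ≠ 0 := sub_ne_zero.2 hzx
          have key : |B z| ≤ ε₀ * |z - x| := by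
            refine le_of_forall_pos_le_add (fun δ hδ => ?_)
            have h1 : ∀ᶠ z' in 𝓝 x, |B z'| < δ/2 := by
              have := hB.continuousAt.tendsto
              rw [hBx] at this
              have h2 : ∀ᶠ z' in 𝓝 x, B z' ∈ Metric.ball (0:ℝ) (δ/2) :=
                this (Metric.ball_mem_nhds (0:ℝ) (by positivity : (0:ℝ) < δ/2))
              refine h2.mono (fun z' hz' => ?_)
              simpa [Real.dist_eq] using hz'
            have h2 : ∀ᶠ z' in 𝓝 x, |z' - x| < δ/(2*(ε₀+1)) := by
              refine (_root_.eventually_nhds_iff.2 ?_)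
              refine ⟨Metric.ball x (δ/(2*(ε₀+1))), fun z' hz' => ?_, Metric.isOpen_ball,
                Metric.mem_ball_self (by positivity)⟩
              simpa [Real.dist_eq] using hz'
            obtain ⟨z', hz'S, hz'b, hz'1, hz'2⟩ :=
              (hev.and (hball.and (((h1.and h2).filter_mono nhdsWithin_le_nhds)))).exists
            have hlip := hLip z ⟨hz, hzb⟩ z' ⟨hz'S, hz'b⟩
            have hBz' := hz'1
            have : |B z| ≤ ε₀ * (|z - x| + |z' - x|) + δ/2 := by
              calc |B z| ≤ |B z - B z'| + |B z'| := by
                    calc |B z| = |(B z - B z') + B z'| := by ring_nf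
                      _ ≤ |B z - B z'| + |B z'| := abs_add_le _ _
                _ ≤ ε₀ * |z - z'| + δ/2 := add_le_add hlip hBz'.le
                _ ≤ ε₀ * (|z - x| + |z' - x|) + δ/2 := by
                    have h5 : |z - z'| ≤ |z - x| + |z' - x| := by
                      calc |z - z'| = |(z - x) - (z' - x)| := by ring_nf
                        _ ≤ |z - x| + |z' - x| := abs_sub _ _
                    nlinarith
            have h6 : ε₀ * |z' - x| ≤ δ/2 := by
              have h7 : ε₀ * |z' - x| ≤ ε₀ * (δ/(2*(ε₀+1))) :=
                mul_le_mul_of_nonneg_left hz'2.le hε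
              have h8 : ε₀ * (δ/(2*(ε₀+1))) ≤ δ/2 := by
                have hpos : (0:ℝ) < 2*(ε₀+1) := by positivity
                rw [mul_comm, div_mul_eq_mul_div, div_le_div_iff₀ hpos (by norm_num : (0:ℝ) < 2)]
                nlinarith
              linarith
            nlinarith
          rw [slope_def_field, abs_div, div_le_iff₀ (abs_pos.2 hzx')]
          calc |B z - B x| = |B z| := by rw [hBx, sub_zero]
            _ ≤ ε₀ * |z - x| := key
      have hclosed : IsClosed {y : ℝ | |y| ≤ ε₀} :=
        isClosed_le continuous_abs continuous_const
      have hmem : dB ∈ closure {y : ℝ | |y| ≤ ε₀} :=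
        mem_closure_of_frequently_of_tendsto (hev2.frequently.mono (fun z hz => hz)) hslope
      rwa [hclosed.closure_eq] at hmem

end Aux

set_option maxHeartbeats 4000000 in
/-- Propagation of the `L^∞` gradient bound for the Duhamel iterate (Lemma 2.6):
for `t̄ ≤ c(a)`, the bound `|∂ₓ f(x,t)| ≤ 2‖f_I‖_{L^∞(−1,1)}/√t` propagates. -/
theorem statement7 (a : ℝ) (ha : a ∈ Set.Ioo (0:ℝ) 1) :
    ∃ c > (0:ℝ), ∀ (abar₀ tbar : ℝ) (fI : ℝ → ℝ) (pI : ℝ) (pn lamn : ℝ → ℝ),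
      ContDiffOn ℝ 2 fI (Set.Icc (-1) 1) → pI ∈ Set.Ioo (-1:ℝ) 1 →
      0 < abar₀ → abar₀ < a / 8 → tbar ≤ c →
      (∀ t, 0 < t → t < tbar →
        |pI - pn t| < abar₀ ∧ -1 ≤ pn t - a ∧ pn t + a ≤ 1 ∧
        |lamn t| ≤ 2 * supNorm fI / Real.sqrt t) →
      ∀ t, 0 < t → t < tbar → ∀ x, |x - pI| < abar₀ →
        |deriv (fun z => duhamelIterate a fI pn lamn z t) x|
          ≤ 2 * supNorm fI / Real.sqrt t := by
  obtain ⟨ha0, ha1⟩ := ha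
  have hKa := Ka_pos a ha0
  refine ⟨min 1 (16 * Ka a)⁻¹, by positivity, ?_⟩
  intro abar₀ tbar fI pI pn lamn hfI hpI hab0 hab8 htbar hhyp t ht htt x hx
  have hcont_fI : ContinuousOn fI (Set.Icc (-1:ℝ) 1) := hfI.continuousOn
  set M := supNorm fI with hM
  have hM0 : 0 ≤ M := supNorm_nonneg fI
  have ht1 : t ≤ 1 := le_trans (le_of_lt htt) (htbar.trans (min_le_left _ _))
  have ht16 : 16 * Ka a * t ≤ 1 := by
    have h1 : t ≤ (16 * Ka a)⁻¹ := (le_of_lt htt).trans (htbar.trans (min_le_right _ _))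
    calc 16 * Ka a * t ≤ 16 * Ka a * (16 * Ka a)⁻¹ :=
          mul_le_mul_of_nonneg_left h1 (by positivity)
      _ = 1 := mul_inv_cancel₀ (by positivity)
  have hst : 0 < Real.sqrt t := Real.sqrt_pos.2 ht
  have hst1 : Real.sqrt t ≤ 1 := by
    rw [show (1:ℝ) = Real.sqrt 1 by rw [Real.sqrt_one]]
    exact Real.sqrt_le_sqrt ht1
  obtain ⟨hpt1, hpt2, hpt3, hlamt⟩ := hhyp t ht htt
  -- bounds on x
  have hpn_abs : |pn t| ≤ 1 - a := by rw [abs_le]; constructor <;> linarith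
  have hxp : |x - pn t| < a/4 := by
    have h1 : |x - pn t| ≤ |x - pI| + |pI - pn t| := by
      calc |x - pn t| = |(x - pI) + (pI - pn t)| := by ring_nf
        _ ≤ _ := abs_add_le _ _
    have h2 : abar₀ < a/8 := hab8
    linarith
  have hxabs : |x| ≤ 1 - 3*a/4 := by
    calc |x| = |(x - pn t) + pn t| := by ring_nf
      _ ≤ |x - pn t| + |pn t| := abs_add_le _ _
      _ ≤ 1 - 3*a/4 := by linarith
  have hx1 : |x| ≤ 1 := by linarith
  have hx2 : |x| ≤ 2 := by linarith
  have hx3 : |x| ≤ 3 := by linarith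
  -- ## Part A : derivative of the initial-datum integral
  set DA : ℝ := ∫ x' in (-1:ℝ)..1, (∑' k : ℤ, dK (x - bpt x' k) t) * fI x' with hDAdef
  have hIoc : Set.uIoc (-1:ℝ) 1 = Set.Ioc (-1:ℝ) 1 := Set.uIoc_of_le (by norm_num)
  have hIcc : Set.uIcc (-1:ℝ) 1 = Set.Icc (-1:ℝ) 1 := Set.uIcc_of_le (by norm_num)
  have hballz : ∀ z ∈ Metric.ball x 1, |z| ≤ 2 := by
    intro z hz
    rw [Metric.mem_ball, Real.dist_eq] at hz
    calc |z| = |(z - x) + x| := by ring_nf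
      _ ≤ |z - x| + |x| := abs_add_le _ _
      _ ≤ 2 := by linarith
  have hFmeas : ∀ᶠ z in 𝓝 x, AEStronglyMeasurable
      (fun x' => heatGamma z x' t * fI x') (volume.restrict (Set.uIoc (-1:ℝ) 1)) := by
    filter_upwards [Metric.ball_mem_nhds x one_pos] with z hz
    rw [hIoc]
    have hz3 : |z| ≤ 3 := by linarith [hballz z hz]
    exact (((continuousOn_tsum_heatK ht hz3).mul hcont_fI).mono
      Set.Ioc_subset_Icc_self).aestronglyMeasurable measurableSet_Ioc
  have hFint : IntervalIntegrable (fun x' => heatGamma x x' t * fI x') volume (-1) 1 := by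
    apply ContinuousOn.intervalIntegrable
    rw [hIcc]
    exact (continuousOn_tsum_heatK ht hx3).mul hcont_fI
  have hF'meas : AEStronglyMeasurable (fun x' => (∑' k : ℤ, dK (x - bpt x' k) t) * fI x')
      (volume.restrict (Set.uIoc (-1:ℝ) 1)) := by
    rw [hIoc]
    exact (((continuousOn_tsum_dK ht hx3).mul hcont_fI).mono
      Set.Ioc_subset_Icc_self).aestronglyMeasurable measurableSet_Ioc
  have hbound : ∀ᵐ x' ∂(volume : Measure ℝ), x' ∈ Set.uIoc (-1:ℝ) 1 →
      ∀ z ∈ Metric.ball x 1, ‖(∑' k : ℤ, dK (z - bpt x' k) t) * fI x'‖ ≤ CB t * M := by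
    refine Filter.Eventually.of_forall (fun x' hx' z hz => ?_)
    rw [hIoc] at hx'
    have hx'1 : |x'| ≤ 1 := by rw [abs_le]; exact ⟨by linarith [hx'.1], hx'.2⟩
    have hz3 : |z| ≤ 3 := by linarith [hballz z hz]
    rw [Real.norm_eq_abs, abs_mul]
    exact mul_le_mul (abs_tsum_dK_le_CB ht hx'1 hz3)
      (abs_le_supNorm hcont_fI (Set.Ioc_subset_Icc_self hx'))
      (abs_nonneg _) (CB_nonneg t ht)
  have hbint : IntervalIntegrable (fun _ : ℝ => CB t * M) volume (-1) 1 :=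
    intervalIntegrable_const
  have hdiff : ∀ᵐ x' ∂(volume : Measure ℝ), x' ∈ Set.uIoc (-1:ℝ) 1 →
      ∀ z ∈ Metric.ball x 1, HasDerivAt (fun w => heatGamma w x' t * fI x')
        ((∑' k : ℤ, dK (z - bpt x' k) t) * fI x') z := by
    refine Filter.Eventually.of_forall (fun x' hx' z hz => ?_)
    rw [hIoc] at hx'
    have hx'1 : |x'| ≤ 1 := by rw [abs_le]; exact ⟨by linarith [hx'.1], hx'.2⟩
    exact (hasDerivAt_tsum_heatK ht (bpt_upper hx'1) (bpt_lower hx'1)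
      (hballz z hz)).mul_const _
  have hmain := intervalIntegral.hasDerivAt_integral_of_dominated_loc_of_deriv_le
    (F := fun z x' => heatGamma z x' t * fI x')
    (F' := fun z x' => (∑' k : ℤ, dK (z - bpt x' k) t) * fI x')
    (bound := fun _ => CB t * M) (Metric.ball_mem_nhds x one_pos) hFmeas hFint hF'meas hbound hbint hdiff
  have hAderiv : HasDerivAt
      (fun z => ∫ x' in (-1:ℝ)..1, heatGamma z x' t * fI x') DA x := hmain.2
  -- ## bound on |DA|
  have hu_cont : Continuous (fun x' : ℝ => |dK (x - x') t|) :=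
    (continuous_abs_dK t).comp (continuous_const.sub continuous_id)
  have hDAbound : |DA| ≤ M * (1/Real.sqrt t) + M * (2 * (Ka a * Real.sqrt t)) := by
    have hg_cont : Continuous (fun x' : ℝ => (|dK (x - x') t| + Rbar a t) * M) :=
      (hu_cont.add continuous_const).mul continuous_const
    have hR6 : 0 ≤ Rbar a t := Rbar_nonneg a t ht
    have hptwise : ∀ᵐ x' ∂volume.restrict (Set.uIoc (-1:ℝ) 1),
        ‖(∑' k : ℤ, dK (x - bpt x' k) t) * fI x'‖ ≤ (|dK (x - x') t| + Rbar a t) * M := by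
      rw [hIoc]
      filter_upwards [ae_restrict_mem measurableSet_Ioc] with x' hx'
      have hx'1 : |x'| ≤ 1 := by rw [abs_le]; exact ⟨by linarith [hx'.1], hx'.2⟩
      have hsplit := abs_tsum_dK_split (a := a) ht ha0 (b := bpt x')
        (fun k hk => dist_bpt_bounds_ne ha0 hxabs hx'1 hk) (summable_dK_bpt ht hx'1 hx3)
      rw [bpt_zero] at hsplit
      rw [Real.norm_eq_abs, abs_mul]
      exact mul_le_mul hsplit (abs_le_supNorm hcont_fI (Set.Ioc_subset_Icc_self hx'))
        (abs_nonneg _) (by positivity)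
    have hgint : IntervalIntegrable (fun x' => (|dK (x - x') t| + Rbar a t) * M)
        volume (-1) 1 := hg_cont.intervalIntegrable _ _
    have h1 := intervalIntegral.norm_integral_le_of_norm_le (by norm_num)
      ((ae_restrict_iff' (measurableSet_Ioc (a := (-1:ℝ)) (b := 1))).1 (by rw [← hIoc]; exact hptwise)) hgint
    rw [Real.norm_eq_abs] at h1
    have h2 : (∫ x' in (-1:ℝ)..1, (|dK (x - x') t| + Rbar a t) * M)
        = ((∫ x' in (-1:ℝ)..1, |dK (x - x') t|) + 2 * Rbar a t) * M := by
      rw [intervalIntegral.integral_mul_const]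
      congr 1
      rw [intervalIntegral.integral_add (hu_cont.intervalIntegrable _ _)
        intervalIntegrable_const]
      rw [intervalIntegral.integral_const, smul_eq_mul]
      norm_num
    have h3 : (∫ x' in (-1:ℝ)..1, |dK (x - x') t|) ≤ 1/Real.sqrt t := integral_abs_dK_le ht hx1
    have h5 : 0 ≤ ∫ x' in (-1:ℝ)..1, |dK (x - x') t| :=
      intervalIntegral.integral_nonneg (by norm_num) (fun u _ => abs_nonneg _)
    have h4 : Rbar a t ≤ Ka a * Real.sqrt t := Rbar_le a t ht ht1 ha0
    rw [h2] at h1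
    have h7 : |((∫ x' in (-1:ℝ)..1, |dK (x - x') t|) + 2 * Rbar a t) * M|
        = ((∫ x' in (-1:ℝ)..1, |dK (x - x') t|) + 2 * Rbar a t) * M := by
      apply abs_of_nonneg
      positivity
    refine h1.trans ?_
    nlinarith
  -- ## Part B : Lipschitz bound
  set r := abar₀ - |x - pI| with hrdef
  have hr0 : 0 < r := sub_pos.2 hx
  have hrab : r ≤ abar₀ := by
    have := abs_nonneg (x - pI); linarith
  have hrball : ∀ z ∈ Metric.ball x r, |z - pI| < abar₀ := by
    intro z hz
    rw [Metric.mem_ball, Real.dist_eq] at hz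
    calc |z - pI| = |(z - x) + (x - pI)| := by ring_nf
      _ ≤ |z - x| + |x - pI| := abs_add_le _ _
      _ < abar₀ := by rw [hrdef] at hz; linarith
  have hball2' : ∀ z ∈ Metric.ball x r, |z| ≤ 2 := by
    intro z hz
    rw [Metric.mem_ball, Real.dist_eq] at hz
    calc |z| = |(z - x) + x| := by ring_nf
      _ ≤ |z - x| + |x| := abs_add_le _ _
      _ ≤ 2 := by nlinarith
  set ε₀ := 8 * Ka a * M * t with hε₀def
  have hε₀0 : 0 ≤ ε₀ := by positivity
  set S : Set ℝ := {z | IntervalIntegrable (fun s =>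
      (heatGamma z (pn s - a) (t - s) - heatGamma z (pn s + a) (t - s)) * lamn s)
      volume 0 t} with hSdef
  have hLip : ∀ z₁ ∈ S ∩ Metric.ball x r, ∀ z₂ ∈ S ∩ Metric.ball x r,
      |(∫ s in (0:ℝ)..t, (heatGamma z₁ (pn s - a) (t - s)
          - heatGamma z₁ (pn s + a) (t - s)) * lamn s)
        - ∫ s in (0:ℝ)..t, (heatGamma z₂ (pn s - a) (t - s)
          - heatGamma z₂ (pn s + a) (t - s)) * lamn s| ≤ ε₀ * |z₁ - z₂| := by
    intro z₁ hz₁ z₂ hz₂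
    have hint1 : IntervalIntegrable (fun s =>
        (heatGamma z₁ (pn s - a) (t - s) - heatGamma z₁ (pn s + a) (t - s)) * lamn s)
        volume 0 t := hz₁.1
    have hint2 : IntervalIntegrable (fun s =>
        (heatGamma z₂ (pn s - a) (t - s) - heatGamma z₂ (pn s + a) (t - s)) * lamn s)
        volume 0 t := hz₂.1
    rw [← intervalIntegral.integral_sub hint1 hint2]
    set gb : ℝ → ℝ := fun s => (4 * Ka a * M * Real.sqrt t * |z₁ - z₂|) * s^(-(1/2):ℝ)
      with hgbdef
    have hgbint : IntervalIntegrable gb volume 0 t :=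
      (intervalIntegrable_rpow' (by norm_num)).const_mul _
    have hgb_nonneg : ∀ s : ℝ, 0 ≤ s → 0 ≤ gb s := by
      intro s hs
      simp only [hgbdef]
      have : (0:ℝ) ≤ s^(-(1/2):ℝ) := Real.rpow_nonneg hs _
      positivity
    have hptw : ∀ᵐ s ∂volume.restrict (Set.uIoc (0:ℝ) t),
        ‖(((heatGamma z₁ (pn s - a) (t - s) - heatGamma z₁ (pn s + a) (t - s)) * lamn s)
          - ((heatGamma z₂ (pn s - a) (t - s) - heatGamma z₂ (pn s + a) (t - s)) * lamn s))‖
          ≤ gb s := by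
      rw [Set.uIoc_of_le ht.le]
      filter_upwards [ae_restrict_mem measurableSet_Ioc] with s hs
      rcases eq_or_lt_of_le hs.2 with hst' | hst'
      · rw [hst']
        simp only [sub_self, heatGamma_zero, zero_mul, sub_zero, norm_zero]
        exact hgb_nonneg t ht.le
      · have hs0 : 0 < s := hs.1
        have hstb : s < tbar := lt_trans hst' htt
        obtain ⟨hps1, hps2, hps3, hlams⟩ := hhyp s hs0 hstb
        have hτ : 0 < t - s := by linarith
        have hτ1 : t - s ≤ 1 := by linarith
        have hpns : |pn s| ≤ 1 - a := by rw [abs_le]; constructor <;> linarith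
        have habs2 := abs_le.1 hpns
        have hpm : |pn s - a| ≤ 1 := by rw [abs_le]; constructor <;> linarith
        have hpp : |pn s + a| ≤ 1 := by rw [abs_le]; constructor <;> linarith
        have hζfacts : ∀ ζ ∈ Metric.ball x r, |ζ| ≤ 1 - 3*a/4 ∧
            3*a/4 ≤ |ζ - (pn s - a)| ∧ 3*a/4 ≤ |ζ - (pn s + a)| := by
          intro ζ hζ
          have hζpI : |ζ - pI| < abar₀ := hrball ζ hζ
          have hζpn : |ζ - pn s| < a/4 := by
            calc |ζ - pn s| = |(ζ - pI) + (pI - pn s)| := by ring_nf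
              _ ≤ |ζ - pI| + |pI - pn s| := abs_add_le _ _
              _ < a/4 := by linarith
          refine ⟨?_, ?_, ?_⟩
          · calc |ζ| = |(ζ - pn s) + pn s| := by ring_nf
              _ ≤ |ζ - pn s| + |pn s| := abs_add_le _ _
              _ ≤ 1 - 3*a/4 := by linarith
          · calc 3*a/4 ≤ a - |pn s - ζ| := by rw [abs_sub_comm]; linarith
              _ = |a| - |pn s - ζ| := by rw [abs_of_pos ha0]
              _ ≤ |a - (pn s - ζ)| := abs_sub_abs_le_abs_sub _ _
              _ = |ζ - (pn s - a)| := by rw [show a - (pn s - ζ) = ζ - (pn s - a) by ring]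
          · calc 3*a/4 ≤ a - |ζ - pn s| := by linarith
              _ = |a| - |ζ - pn s| := by rw [abs_of_pos ha0]
              _ ≤ |a - (ζ - pn s)| := abs_sub_abs_le_abs_sub _ _
              _ = |ζ - (pn s + a)| := by
                  rw [show a - (ζ - pn s) = -(ζ - (pn s + a)) by ring, abs_neg]
        have hd : ∀ ζ ∈ Metric.ball x r, HasDerivWithinAt
            (fun w => heatGamma w (pn s - a) (t-s) - heatGamma w (pn s + a) (t-s))
            ((∑' k : ℤ, dK (ζ - bpt (pn s - a) k) (t-s))
              - (∑' k : ℤ, dK (ζ - bpt (pn s + a) k) (t-s))) (Metric.ball x r) ζ := by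
          intro ζ hζ
          exact (((hasDerivAt_tsum_heatK hτ (bpt_upper hpm) (bpt_lower hpm)
            (hball2' ζ hζ)).sub (hasDerivAt_tsum_heatK hτ (bpt_upper hpp) (bpt_lower hpp)
              (hball2' ζ hζ)))).hasDerivWithinAt
        have hdbound : ∀ ζ ∈ Metric.ball x r,
            ‖(∑' k : ℤ, dK (ζ - bpt (pn s - a) k) (t-s))
              - (∑' k : ℤ, dK (ζ - bpt (pn s + a) k) (t-s))‖ ≤ 2 * Rbar a (t-s) := by
          intro ζ hζ
          obtain ⟨hζ1, hm1, hm2⟩ := hζfacts ζ hζ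
          rw [Real.norm_eq_abs]
          calc |(∑' k : ℤ, dK (ζ - bpt (pn s - a) k) (t-s))
              - (∑' k : ℤ, dK (ζ - bpt (pn s + a) k) (t-s))|
              ≤ |∑' k : ℤ, dK (ζ - bpt (pn s - a) k) (t-s)|
                + |∑' k : ℤ, dK (ζ - bpt (pn s + a) k) (t-s)| := abs_sub _ _
            _ ≤ Rbar a (t-s) + Rbar a (t-s) := add_le_add
                (abs_tsum_dK_le_Rbar hτ ha0 (dist_bpt_bounds ha0 hζ1 hpm hm1))
                (abs_tsum_dK_le_Rbar hτ ha0 (dist_bpt_bounds ha0 hζ1 hpp hm2))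
            _ = 2 * Rbar a (t-s) := by ring
        have hmvt := Convex.norm_image_sub_le_of_norm_hasDerivWithin_le hd hdbound
          (convex_ball x r) hz₂.2 hz₁.2
        rw [Real.norm_eq_abs, Real.norm_eq_abs] at hmvt
        have heqq : ((heatGamma z₁ (pn s - a) (t - s) - heatGamma z₁ (pn s + a) (t - s)) * lamn s)
            - ((heatGamma z₂ (pn s - a) (t - s) - heatGamma z₂ (pn s + a) (t - s)) * lamn s)
            = ((heatGamma z₁ (pn s - a) (t - s) - heatGamma z₁ (pn s + a) (t - s))
              - (heatGamma z₂ (pn s - a) (t - s) - heatGamma z₂ (pn s + a) (t - s))) * lamn s := by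
          ring
        rw [Real.norm_eq_abs, heqq, abs_mul]
        have hR : Rbar a (t-s) ≤ Ka a * Real.sqrt t :=
          (Rbar_le a (t-s) hτ hτ1 ha0).trans (mul_le_mul_of_nonneg_left
            (Real.sqrt_le_sqrt (by linarith)) hKa.le)
        have hsinv : s^(-(1/2):ℝ) = (Real.sqrt s)⁻¹ := by
          rw [Real.rpow_neg hs0.le, ← Real.sqrt_eq_rpow]
        have hss0 : 0 < Real.sqrt s := Real.sqrt_pos.2 hs0
        have hh1 : |(heatGamma z₁ (pn s - a) (t - s) - heatGamma z₁ (pn s + a) (t - s))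
              - (heatGamma z₂ (pn s - a) (t - s) - heatGamma z₂ (pn s + a) (t - s))|
            ≤ 2 * (Ka a * Real.sqrt t) * |z₁ - z₂| := by
          refine hmvt.trans ?_
          have h9 := mul_le_mul_of_nonneg_right
            (show 2 * Rbar a (t-s) ≤ 2*(Ka a*Real.sqrt t) by linarith) (abs_nonneg (z₁ - z₂))
          linarith
        calc |(heatGamma z₁ (pn s - a) (t - s) - heatGamma z₁ (pn s + a) (t - s))
              - (heatGamma z₂ (pn s - a) (t - s) - heatGamma z₂ (pn s + a) (t - s))| * |lamn s|
            ≤ (2 * (Ka a * Real.sqrt t) * |z₁ - z₂|) * (2 * M / Real.sqrt s) :=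
              mul_le_mul hh1 hlams (abs_nonneg _) (by positivity)
          _ = gb s := by
              simp only [hgbdef]
              rw [hsinv]
              field_simp
              ring
    have h1 := intervalIntegral.norm_integral_le_of_norm_le ht.le
      ((ae_restrict_iff' (measurableSet_Ioc (a := (0:ℝ)) (b := t))).1 (by rw [← Set.uIoc_of_le ht.le]; exact hptw)) hgbint
    rw [Real.norm_eq_abs] at h1
    have hgbval : (∫ s in (0:ℝ)..t, gb s)
        = (4 * Ka a * M * Real.sqrt t * |z₁ - z₂|) * (2 * Real.sqrt t) := by
      simp only [hgbdef]
      rw [intervalIntegral.integral_const_mul]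
      congr 1
      rw [integral_rpow (Or.inl (by norm_num : (-1:ℝ) < -(1/2)))]
      have h0 : ((0:ℝ))^(-(1/2:ℝ)+1) = 0 := by
        rw [show (-(1/2:ℝ)+1) = 1/2 by norm_num]
        exact Real.zero_rpow (by norm_num)
      have ht' : (t:ℝ)^(-(1/2:ℝ)+1) = Real.sqrt t := by
        rw [show (-(1/2:ℝ)+1) = 1/2 by norm_num, ← Real.sqrt_eq_rpow]
      rw [h0, ht']
      norm_num
      ring
    rw [hgbval] at h1
    have habs : |(4 * Ka a * M * Real.sqrt t * |z₁ - z₂|) * (2 * Real.sqrt t)|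
        = (4 * Ka a * M * Real.sqrt t * |z₁ - z₂|) * (2 * Real.sqrt t) := by
      apply abs_of_nonneg; positivity
    refine h1.trans (le_of_eq ?_)
    rw [hε₀def]
    have hss : Real.sqrt t * Real.sqrt t = t := Real.mul_self_sqrt ht.le
    linear_combination (8*Ka a*M*|z₁ - z₂|) * hss
  have hS0 : ∀ z ∈ Metric.ball x r, z ∉ S →
      (∫ s in (0:ℝ)..t, (heatGamma z (pn s - a) (t - s)
        - heatGamma z (pn s + a) (t - s)) * lamn s) = 0 := by
    intro z _ hz
    exact intervalIntegral.integral_undef hz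
  have hkey := keyB (fun z => ∫ x' in (-1:ℝ)..1, heatGamma z x' t * fI x')
    (fun z => ∫ s in (0:ℝ)..t, (heatGamma z (pn s - a) (t - s)
      - heatGamma z (pn s + a) (t - s)) * lamn s)
    x DA ε₀ r hε₀0 hr0 S hLip hS0 hAderiv
  have e1 : 2 * (Ka a * Real.sqrt t) ≤ 1/(2*Real.sqrt t) := by
    rw [le_div_iff₀ (by positivity)]
    nlinarith [Real.mul_self_sqrt ht.le, mul_nonneg hKa.le ht.le]
  have e2 : 8 * Ka a * t ≤ 1/(2*Real.sqrt t) := by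
    rw [le_div_iff₀ (by positivity)]
    have h16 : 16 * Ka a * t * Real.sqrt t ≤ 16 * Ka a * t * 1 :=
      mul_le_mul_of_nonneg_left hst1 (by positivity)
    nlinarith
  have e1' : M * (2 * (Ka a * Real.sqrt t)) ≤ M * (1/(2*Real.sqrt t)) :=
    mul_le_mul_of_nonneg_left e1 hM0
  have e2' : ε₀ ≤ M * (1/(2*Real.sqrt t)) := by
    rw [hε₀def]
    calc 8 * Ka a * M * t = M * (8 * Ka a * t) := by ring
      _ ≤ M * (1/(2*Real.sqrt t)) := mul_le_mul_of_nonneg_left e2 hM0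
  have efinal : M * (1/Real.sqrt t) + M * (1/(2*Real.sqrt t)) + M * (1/(2*Real.sqrt t))
      = 2 * M / Real.sqrt t := by
    field_simp
    ring
  refine le_trans hkey ?_
  calc |DA| + ε₀ ≤ (M * (1/Real.sqrt t) + M * (2 * (Ka a * Real.sqrt t)))
        + M * (1/(2*Real.sqrt t)) := add_le_add hDAbound e2'
    _ ≤ M * (1/Real.sqrt t) + M * (1/(2*Real.sqrt t)) + M * (1/(2*Real.sqrt t)) := by linarith
    _ = 2 * M / Real.sqrt t := efinal
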